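/- For all real numbers a > 0, b > 0, k > 1, and Δ with a/k + Δ ≥ 0 and a ≥ a/k + Δ, the inequality (a/(a+b) - (a+Δk)/(a+Δk+b)) + (k-1)·(a/(a+b) - (a - a/k - Δ)/(a - a/k - Δ + b - b/k)) ≥ 0 holds. -/

import Mathlib

theorem stmt_0 (a b k Δ : ℝ) (ha : 0 < a) (hb : 0 < b) (hk : 1 < k)
    (h1 : 0 ≤ a / k + Δ) (h2 : a / k + Δ ≤ a) :
    (a / (a + b) - (a + Δ * k) / (a + Δ * k + b)) +
      (k - 1) * (a / (a + b) - (a - a / k - Δ) / (a - a / k - Δ + b - b / k)) ≥ 0 := by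
  have hk0 : (0:ℝ) < k := by linarith
  have hkne : k ≠ 0 := ne_of_gt hk0
  obtain ⟨u, hu⟩ : ∃ u, a = u * k := ⟨a / k, (div_mul_cancel₀ a hkne).symm⟩
  obtain ⟨v, hv⟩ : ∃ v, b = v * k := ⟨b / k, (div_mul_cancel₀ b hkne).symm⟩
  subst hu hv
  rw [mul_div_cancel_right₀ u hkne, mul_div_cancel_right₀ v hkne] at *
  have hu0 : 0 < u := by nlinarith
  have hv0 : 0 < v := by nlinarith
  have hd1 : 0 < u * k + v * k := by linarith
  have hd2 : 0 < u * k + Δ * k + v * k := by nlinarith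
  have hd3 : 0 < u * k - u - Δ + v * k - v := by nlinarith
  have key : (u * k / (u * k + v * k) - (u * k + Δ * k) / (u * k + Δ * k + v * k)) +
      (k - 1) * (u * k / (u * k + v * k) - (u * k - u - Δ) / (u * k - u - Δ + v * k - v)) =
      v * k * Δ^2 * k^2 / ((u * k + v * k) * ((u * k + Δ * k + v * k) * (u * k - u - Δ + v * k - v))) := by
    rw [div_sub_div _ _ hd1.ne' hd2.ne', div_sub_div _ _ hd1.ne' hd3.ne', mul_div_assoc', div_add_div _ _ (by positivity) (by positivity), div_eq_div_iff (by positivity) (by positivity)]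
    ring
  rw [key]
  positivity
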